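/- For every integer ℓ ≥ 2, every real ρ ≥ 1, and every integer 1 ≤ i ≤ ℓ, the inequality (i(i+1)/2 − ℓ)·ρ·(2/3) + ℓ·ρ ≤ i·((ℓ+2)/3)·ρ holds. That is, the pair (t, α) = (((ℓ+2)/3)·ρ, 2/3) simultaneously satisfies all ℓ inequalities (i(i+1)/2 − ℓ)·ρ·α + ℓ·ρ ≤ i·t for 1 ≤ i ≤ ℓ. -/
import Mathlib

/-- The pair `(t, α) = (((ℓ+2)/3)·ρ, 2/3)` simultaneously satisfies all ℓ inequalities
`(i(i+1)/2 − ℓ)·ρ·α + ℓ·ρ ≤ i·t` for `1 ≤ i ≤ ℓ`, arising in the analysis of the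
combined top-down/bottom-up heuristic for the multi-level Steiner tree problem. -/
theorem stmt_3 (ℓ : ℕ) (hℓ : 2 ≤ ℓ) (ρ : ℝ) (hρ : 1 ≤ ρ) :
    ∀ i : ℕ, 1 ≤ i → i ≤ ℓ →
      ((i : ℝ) * ((i : ℝ) + 1) / 2 - (ℓ : ℝ)) * ρ * (2 / 3) + (ℓ : ℝ) * ρ ≤
        (i : ℝ) * ((((ℓ : ℝ) + 2) / 3) * ρ) := by
  intro i h1 h2
  have h1' : (1 : ℝ) ≤ i := by exact_mod_cast h1
  have h2' : (i : ℝ) ≤ ℓ := by exact_mod_cast h2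
  nlinarith [mul_nonneg (mul_nonneg (by linarith : (0:ℝ) ≤ (i:ℝ) - 1) (by linarith : (0:ℝ) ≤ (ℓ:ℝ) - i)) (by linarith : (0:ℝ) ≤ ρ)]
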